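/- (Thomson's principle) Let G be a finite connected graph with positive conductances and p > 1. Then R_p(a,b) = [inf over unit flows θ from a to b of ∑_{e∈E} r_e^{1/(p-1)} |θ(e)|^{p/(p-1)}]^{p-1}, and the infimum is attained at a current flow. -/

import Mathlib

open Finset Real

set_option linter.unusedSectionVars false

section ThomsonAux
variable {V : Type*} [Fintype V] [DecidableEq V]

private lemma sgnpow_mul (r s t : ℝ) : |s * t| ^ r * (s * t) = (|s| ^ r * s) * (|t| ^ r * t) := by
  rw [abs_mul, Real.mul_rpow (abs_nonneg _) (abs_nonneg _)]; ring

private lemma abs_sgnpow (r t : ℝ) (hr : r + 1 ≠ 0) : abs (|t| ^ r * t) = |t| ^ (r + 1) := by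
  rcases eq_or_ne t 0 with h | h
  · simp [h, Real.zero_rpow hr]
  · rw [abs_mul, abs_of_nonneg (Real.rpow_nonneg (abs_nonneg t) r),
      ← Real.rpow_add_one (abs_ne_zero.mpr h)]

private lemma sgnpow_sq (r t : ℝ) (hr : r + 2 ≠ 0) : |t| ^ r * t * t = |t| ^ (r + 2) := by
  rcases eq_or_ne t 0 with h | h
  · simp [h, Real.zero_rpow hr]
  · have ht : |t| ≠ 0 := abs_ne_zero.mpr h
    have : |t| ^ (r + 2) = |t| ^ r * |t| * |t| := by
      rw [show r + 2 = r + 1 + 1 by ring, Real.rpow_add_one ht, Real.rpow_add_one ht]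
    rw [this, mul_assoc, mul_assoc, abs_mul_abs_self]

private lemma key_ineq (q : ℝ) (hq : 1 < q) (s t : ℝ) :
    |s| ^ q + q * ((|s| ^ (q - 2) * s) * (t - s)) ≤ |t| ^ q := by
  have hq0 : (0:ℝ) < q := by linarith
  have hq1 : q - 1 ≠ 0 := by intro h'; linarith [sub_eq_zero.mp h']
  have hconj : (q / (q - 1)).HolderConjugate q :=
    (Real.HolderConjugate.conjExponent hq).symm
  have hy := Real.young_inequality_of_nonneg
    (Real.rpow_nonneg (abs_nonneg s) (q - 1)) (abs_nonneg t) hconj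
  have h4 : (|s| ^ (q - 1)) ^ (q / (q - 1)) = |s| ^ q := by
    rw [← Real.rpow_mul (abs_nonneg s)]
    congr 1; field_simp
  rw [h4] at hy
  have h1 : |s| ^ (q - 2) * s * t ≤ |s| ^ (q - 1) * |t| := by
    calc |s| ^ (q - 2) * s * t ≤ abs (|s| ^ (q - 2) * s * t) := le_abs_self _
      _ = abs (|s| ^ (q - 2) * s) * |t| := abs_mul _ _
      _ = |s| ^ (q - 1) * |t| := by
          rw [abs_sgnpow (q - 2) s (by rw [show q - 2 + 1 = q - 1 by ring]; exact hq1),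
            show q - 2 + 1 = q - 1 by ring]
  have h2 : |s| ^ (q - 2) * s * s = |s| ^ q := by
    rw [sgnpow_sq (q - 2) s (by rw [show q - 2 + 2 = q by ring]; exact hq0.ne'),
      show q - 2 + 2 = q by ring]
  have e : |s| ^ q / (q / (q - 1)) = (q - 1) * |s| ^ q / q := by
    rw [div_div_eq_mul_div]; ring
  rw [e] at hy
  have hy2 := mul_le_mul_of_nonneg_left hy hq0.le
  have h12 := mul_le_mul_of_nonneg_left h1 hq0.le
  have eq2 : q * ((q - 1) * |s| ^ q / q + |t| ^ q / q) = (q - 1) * |s| ^ q + |t| ^ q := by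
    field_simp
  rw [eq2] at hy2
  nlinarith [h2]

variable (G : SimpleGraph V) [DecidableRel G.Adj]

private lemma nbr_sum_comm (F : V → V → ℝ) :
    ∑ x, ∑ y ∈ G.neighborFinset x, F x y = ∑ x, ∑ y ∈ G.neighborFinset x, F y x := by
  have e : ∀ (H : V → V → ℝ), ∑ x, ∑ y ∈ G.neighborFinset x, H x y
      = ∑ x, ∑ y, if G.Adj x y then H x y else 0 := by
    intro H
    refine Finset.sum_congr rfl fun x _ => ?_
    rw [SimpleGraph.neighborFinset_eq_filter, Finset.sum_filter]
  rw [e, e, Finset.sum_comm]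
  refine Finset.sum_congr rfl fun x _ => Finset.sum_congr rfl fun y _ => ?_
  exact if_congr (G.adj_comm y x) rfl rfl

private lemma total_div_zero (J : V → V → ℝ) (hJ : ∀ x y, J x y = -J y x) :
    ∑ x, ∑ y ∈ G.neighborFinset x, J x y = 0 := by
  have h1 := nbr_sum_comm G J
  have h2 : ∑ x, ∑ y ∈ G.neighborFinset x, J y x
      = - ∑ x, ∑ y ∈ G.neighborFinset x, J x y := by
    rw [Finset.sum_congr rfl (fun x _ => Finset.sum_congr rfl (fun y _ => hJ y x)),
      Finset.sum_congr rfl (fun x (_ : x ∈ univ) => Finset.sum_neg_distrib _),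
      Finset.sum_neg_distrib]
  rw [h2] at h1
  linarith

private lemma sum_by_parts (f : V → ℝ) (J : V → V → ℝ) (hJ : ∀ x y, J x y = -J y x) :
    ∑ x, ∑ y ∈ G.neighborFinset x, (f y - f x) * J x y
      = -2 * ∑ x, f x * ∑ y ∈ G.neighborFinset x, J x y := by
  have h1 : ∑ x, ∑ y ∈ G.neighborFinset x, f y * J x y
      = - ∑ x, ∑ y ∈ G.neighborFinset x, f x * J x y := by
    rw [nbr_sum_comm G (fun x y => f y * J x y)]
    have heq : ∀ x y : V, f x * J y x = -(f x * J x y) := fun x y => by rw [hJ y x]; ring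
    rw [Finset.sum_congr rfl (fun x _ => Finset.sum_congr rfl (fun y _ => heq x y)),
      Finset.sum_congr rfl (fun x (_ : x ∈ univ) => Finset.sum_neg_distrib _),
      Finset.sum_neg_distrib]
  have h2 : ∀ x : V, ∑ y ∈ G.neighborFinset x, (f y - f x) * J x y
      = (∑ y ∈ G.neighborFinset x, f y * J x y) - ∑ y ∈ G.neighborFinset x, f x * J x y := by
    intro x
    rw [← Finset.sum_sub_distrib]
    exact Finset.sum_congr rfl fun y _ => by ring
  rw [Finset.sum_congr rfl fun x _ => h2 x, Finset.sum_sub_distrib, h1]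
  rw [Finset.sum_congr rfl fun x (_ : x ∈ univ) => (Finset.mul_sum _ _ _ : f x * _ = _)]
  ring

private lemma const_of_adj (hconn : G.Connected) (h : V → ℝ)
    (hl : ∀ x y, G.Adj x y → h x = h y) (x y : V) : h x = h y := by
  obtain ⟨w⟩ := hconn.preconnected x y
  induction w with
  | nil => rfl
  | cons hadj _ ih => exact (hl _ _ hadj).trans ih

private lemma sum_split_ab (a b : V) (hab : a ≠ b) (f : V → ℝ)
    (hf : ∀ x, x ≠ a → x ≠ b → f x = 0) :
    ∑ x, f x = f a + f b := by
  rw [← Finset.sum_subset (Finset.subset_univ ({a, b} : Finset V))]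
  · rw [Finset.sum_pair hab]
  · intro x _ hx
    simp only [Finset.mem_insert, Finset.mem_singleton] at hx
    push_neg at hx
    exact hf x hx.1 hx.2

end ThomsonAux



/-- Thomson's principle: the p-effective resistance equals the (p-1)-th power of the
infimum of the energy over unit flows from a to b, and the infimum is attained at a
current flow. -/
theorem thomson_principle {V : Type*} [Fintype V] [DecidableEq V]
    (G : SimpleGraph V) [DecidableRel G.Adj] (hconn : G.Connected)
    (p : ℝ) (hp : 1 < p)
    (c : V → V → ℝ) (hc_sym : ∀ x y, c x y = c y x)
    (hc_pos : ∀ x y, G.Adj x y → 0 < c x y)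
    (a b : V) (hab : a ≠ b)
    (h : V → ℝ)
    (hharm : ∀ x, x ≠ a → x ≠ b →
      ∑ y ∈ G.neighborFinset x, c x y * |h y - h x| ^ (p - 2) * (h y - h x) = 0)
    (hnc : ∃ x y, h x ≠ h y)
    (I : V → V → ℝ)
    (hI : ∀ x y, I x y = c x y * |h y - h x| ^ (p - 2) * (h y - h x))
    (S : Set ℝ)
    (hS : S = {E : ℝ | ∃ θ : V → V → ℝ,
      (∀ x y, θ x y = -θ y x) ∧
      (∀ x, x ≠ a → x ≠ b → ∑ y ∈ G.neighborFinset x, θ x y = 0) ∧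
      (∑ x ∈ G.neighborFinset a, θ a x = 1) ∧
      E = (1 / 2) * ∑ x, ∑ y ∈ G.neighborFinset x,
            (c x y)⁻¹ ^ ((1 : ℝ) / (p - 1)) * |θ x y| ^ (p / (p - 1))}) :
    |h b - h a| ^ (p - 2) * (h b - h a) / (∑ x ∈ G.neighborFinset a, I a x) =
        sInf S ^ (p - 1) ∧
    (∃ θ : V → V → ℝ,
      (∀ x y, θ x y = -θ y x) ∧
      (∀ x, x ≠ a → x ≠ b → ∑ y ∈ G.neighborFinset x, θ x y = 0) ∧
      (∑ x ∈ G.neighborFinset a, θ a x = 1) ∧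
      (1 / 2) * ∑ x, ∑ y ∈ G.neighborFinset x,
          (c x y)⁻¹ ^ ((1 : ℝ) / (p - 1)) * |θ x y| ^ (p / (p - 1)) = sInf S ∧
      (∃ g : V → ℝ,
        (∀ x, x ≠ a → x ≠ b →
          ∑ y ∈ G.neighborFinset x, c x y * |g y - g x| ^ (p - 2) * (g y - g x) = 0) ∧
        ∀ x y, G.Adj x y → θ x y = c x y * |g y - g x| ^ (p - 2) * (g y - g x))) := by
  classical
  have hp1 : (0:ℝ) < p - 1 := by linarith
  have hppos : (0:ℝ) < p := by linarith
  have hq : 1 < p / (p - 1) := by rw [lt_div_iff₀ hp1]; linarith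
  have hadj : ∀ x y : V, y ∈ G.neighborFinset x → G.Adj x y :=
    fun x y hy => by rwa [SimpleGraph.mem_neighborFinset] at hy
  -- antisymmetry of the current flow
  have hIanti : ∀ x y, I x y = -I y x := by
    intro x y
    rw [hI x y, hI y x, hc_sym x y, abs_sub_comm (h x) (h y)]
    ring
  -- divergence of I at interior vertices
  have hdivI : ∀ x, x ≠ a → x ≠ b → ∑ y ∈ G.neighborFinset x, I x y = 0 := by
    intro x hxa hxb
    simp only [hI]
    exact hharm x hxa hxb
  set K : ℝ := ∑ x ∈ G.neighborFinset a, I a x with hKdef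
  have htot : ∑ x, ∑ y ∈ G.neighborFinset x, I x y = 0 := total_div_zero G I hIanti
  have hdivIb : ∑ y ∈ G.neighborFinset b, I b y = -K := by
    rw [sum_split_ab a b hab _ hdivI, ← hKdef] at htot
    linarith
  set W2 : ℝ := ∑ x, ∑ y ∈ G.neighborFinset x, c x y * |h y - h x| ^ p with hW2def
  have hW2a : ∑ x, ∑ y ∈ G.neighborFinset x, (h y - h x) * I x y = W2 := by
    rw [hW2def]
    refine Finset.sum_congr rfl fun x _ => Finset.sum_congr rfl fun y _ => ?_
    rw [hI x y]
    have hsq := sgnpow_sq (p - 2) (h y - h x)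
      (by rw [show p - 2 + 2 = p by ring]; exact hppos.ne')
    rw [show p - 2 + 2 = p by ring] at hsq
    calc (h y - h x) * (c x y * |h y - h x| ^ (p - 2) * (h y - h x))
        = c x y * (|h y - h x| ^ (p - 2) * (h y - h x) * (h y - h x)) := by ring
      _ = c x y * |h y - h x| ^ p := by rw [hsq]
  have hhx : ∑ x, h x * ∑ y ∈ G.neighborFinset x, I x y = h a * K + h b * (-K) := by
    rw [sum_split_ab a b hab _ (fun x hxa hxb => by rw [hdivI x hxa hxb, mul_zero]),
      ← hKdef, hdivIb]
  have hW2K : W2 = 2 * (K * (h b - h a)) := by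
    rw [← hW2a, sum_by_parts G h I hIanti, hhx]
    ring
  have hW2nn : ∀ x : V, ∀ y ∈ G.neighborFinset x, 0 ≤ c x y * |h y - h x| ^ p :=
    fun x y hy => mul_nonneg (hc_pos x y (hadj x y hy)).le (Real.rpow_nonneg (abs_nonneg _) p)
  have hW2ge : 0 ≤ W2 := by
    rw [hW2def]
    exact Finset.sum_nonneg fun x _ => Finset.sum_nonneg (hW2nn x)
  have hW2ne : W2 ≠ 0 := by
    intro h0
    obtain ⟨u, v, huv⟩ := hnc
    refine huv (const_of_adj G hconn h (fun x y hxy => ?_) u v)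
    rw [hW2def] at h0
    have h1 := (Finset.sum_eq_zero_iff_of_nonneg
      (fun x _ => Finset.sum_nonneg (hW2nn x))).mp h0 x (Finset.mem_univ x)
    have h2 := (Finset.sum_eq_zero_iff_of_nonneg (hW2nn x)).mp h1 y
      (by rw [SimpleGraph.mem_neighborFinset]; exact hxy)
    have h3 : |h y - h x| ^ p = 0 := by
      rcases mul_eq_zero.mp h2 with h' | h'
      · exact absurd h' (hc_pos x y hxy).ne'
      · exact h'
    have h4 : h y - h x = 0 :=
      abs_eq_zero.mp ((Real.rpow_eq_zero (abs_nonneg _) hppos.ne').mp h3)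
    linarith
  have hW2pos : 0 < W2 := hW2ge.lt_of_ne (Ne.symm hW2ne)
  have hKD : 0 < K * (h b - h a) := by nlinarith [hW2K]
  have hKne : K ≠ 0 := by
    intro h0
    rw [h0, zero_mul] at hKD
    exact lt_irrefl 0 hKD
  have hDne : h b - h a ≠ 0 := by
    intro h0
    rw [h0, mul_zero] at hKD
    exact lt_irrefl 0 hKD
  -- absolute value of the current
  have habsI : ∀ x y, G.Adj x y → |I x y| = c x y * |h y - h x| ^ (p - 1) := by
    intro x y hxy
    rw [hI x y, mul_assoc, abs_mul, abs_of_pos (hc_pos x y hxy),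
      abs_sgnpow (p - 2) _ (by rw [show p - 2 + 1 = p - 1 by ring]; exact hp1.ne'),
      show p - 2 + 1 = p - 1 by ring]
  -- per-edge energy of the scaled current flow
  have hterm : ∀ x y, G.Adj x y →
      (c x y)⁻¹ ^ ((1:ℝ)/(p-1)) * |I x y / K| ^ (p/(p-1))
        = c x y * |h y - h x| ^ p * (|K| ^ (p/(p-1)))⁻¹ := by
    intro x y hxy
    have hc := hc_pos x y hxy
    have hc1 : c x y ^ (p/(p-1)) * (c x y ^ ((1:ℝ)/(p-1)))⁻¹ = c x y := by
      rw [← div_eq_mul_inv, ← Real.rpow_sub hc, div_sub_div_same, div_self hp1.ne',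
        Real.rpow_one]
    calc (c x y)⁻¹ ^ ((1:ℝ)/(p-1)) * |I x y / K| ^ (p/(p-1))
        = (c x y ^ ((1:ℝ)/(p-1)))⁻¹ *
            ((c x y * |h y - h x| ^ (p-1)) * |K|⁻¹) ^ (p/(p-1)) := by
          rw [Real.inv_rpow hc.le, abs_div, habsI x y hxy,
            div_eq_mul_inv (c x y * |h y - h x| ^ (p-1)) |K|]
      _ = (c x y ^ ((1:ℝ)/(p-1)))⁻¹ * (c x y ^ (p/(p-1)) *
            |h y - h x| ^ ((p-1) * (p/(p-1))) * (|K| ^ (p/(p-1)))⁻¹) := by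
          rw [Real.mul_rpow (mul_nonneg hc.le (Real.rpow_nonneg (abs_nonneg _) _))
              (inv_nonneg.mpr (abs_nonneg K)),
            Real.inv_rpow (abs_nonneg K),
            Real.mul_rpow hc.le (Real.rpow_nonneg (abs_nonneg _) _),
            Real.rpow_mul (abs_nonneg _)]
      _ = c x y * |h y - h x| ^ p * (|K| ^ (p/(p-1)))⁻¹ := by
          rw [show (p-1) * (p/(p-1)) = p by field_simp]
          linear_combination (|h y - h x| ^ p * (|K| ^ (p/(p-1)))⁻¹) * hc1
  -- per-edge identity for the weighted signed power of the scaled current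
  have hwphi : ∀ x y, G.Adj x y →
      (c x y)⁻¹ ^ ((1:ℝ)/(p-1)) * (|I x y / K| ^ (p/(p-1) - 2) * (I x y / K))
        = (h y - h x) * (|K⁻¹| ^ (p/(p-1) - 2) * K⁻¹) := by
    intro x y hxy
    have hc := hc_pos x y hxy
    have hφ : |I x y| ^ (p/(p-1) - 2) * I x y = c x y ^ ((1:ℝ)/(p-1)) * (h y - h x) := by
      rcases eq_or_ne (h y - h x) 0 with hD | hD
      · rw [hI x y, hD]; simp
      · rw [habsI x y hxy, hI x y,
          Real.mul_rpow hc.le (Real.rpow_nonneg (abs_nonneg _) _),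
          ← Real.rpow_mul (abs_nonneg _)]
        have e1 : |h y - h x| ^ ((p-1) * (p/(p-1) - 2)) * |h y - h x| ^ (p-2) = 1 := by
          rw [← Real.rpow_add (abs_pos.mpr hD),
            show (p-1) * (p/(p-1) - 2) + (p-2) = 0 by field_simp; ring,
            Real.rpow_zero]
        have e2 : c x y ^ (p/(p-1) - 2) * c x y = c x y ^ ((1:ℝ)/(p-1)) := by
          rw [← Real.rpow_add_one hc.ne',
            show p/(p-1) - 2 + 1 = p/(p-1) - 1 by ring,
            show p/(p-1) - 1 = (1:ℝ)/(p-1) by rw [div_sub_one hp1.ne']; ring_nf]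
        calc c x y ^ (p/(p-1) - 2) * |h y - h x| ^ ((p-1) * (p/(p-1) - 2)) *
              (c x y * |h y - h x| ^ (p-2) * (h y - h x))
            = (c x y ^ (p/(p-1) - 2) * c x y) *
              ((|h y - h x| ^ ((p-1) * (p/(p-1) - 2)) * |h y - h x| ^ (p-2)) *
                (h y - h x)) := by ring
          _ = c x y ^ ((1:ℝ)/(p-1)) * (h y - h x) := by rw [e1, e2]; ring
    have ecan : (c x y ^ ((1:ℝ)/(p-1)))⁻¹ * c x y ^ ((1:ℝ)/(p-1)) = 1 :=
      inv_mul_cancel₀ (Real.rpow_pos_of_pos hc _).ne'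
    rw [div_eq_mul_inv (I x y) K, sgnpow_mul (p/(p-1) - 2) (I x y) K⁻¹, hφ,
      Real.inv_rpow hc.le]
    linear_combination
      ((h y - h x) * (|K⁻¹| ^ (p/(p-1) - 2) * K⁻¹)) * ecan
  -- scaled current flow is a unit flow
  have hθanti : ∀ x y : V, I x y / K = -(I y x / K) := by
    intro x y; rw [hIanti x y]; ring
  have hθint : ∀ x, x ≠ a → x ≠ b → ∑ y ∈ G.neighborFinset x, I x y / K = 0 := by
    intro x hxa hxb
    rw [← Finset.sum_div, hdivI x hxa hxb, zero_div]
  have hθa : ∑ x ∈ G.neighborFinset a, I a x / K = 1 := by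
    rw [← Finset.sum_div, ← hKdef, div_self hKne]
  -- value of the energy of the scaled current flow
  have hE0val : (1/2) * ∑ x, ∑ y ∈ G.neighborFinset x,
      (c x y)⁻¹ ^ ((1:ℝ)/(p-1)) * |I x y / K| ^ (p/(p-1))
        = K * (h b - h a) * (|K| ^ (p/(p-1)))⁻¹ := by
    rw [Finset.sum_congr rfl (fun x (_ : x ∈ univ) =>
        Finset.sum_congr rfl (fun y hy => hterm x y (hadj x y hy)))]
    rw [Finset.sum_congr rfl (fun x (_ : x ∈ univ) => (Finset.sum_mul _ _ _).symm),
      (Finset.sum_mul _ _ _).symm, ← hW2def, hW2K]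
    ring
  -- lower bound: any unit flow has at least this energy
  have hEbound : ∀ θ : V → V → ℝ,
      (∀ x y, θ x y = -θ y x) →
      (∀ x, x ≠ a → x ≠ b → ∑ y ∈ G.neighborFinset x, θ x y = 0) →
      (∑ x ∈ G.neighborFinset a, θ a x = 1) →
      (1/2) * ∑ x, ∑ y ∈ G.neighborFinset x,
          (c x y)⁻¹ ^ ((1:ℝ)/(p-1)) * |I x y / K| ^ (p/(p-1))
        ≤ (1/2) * ∑ x, ∑ y ∈ G.neighborFinset x,
          (c x y)⁻¹ ^ ((1:ℝ)/(p-1)) * |θ x y| ^ (p/(p-1)) := by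
    intro θ hanti hint hsa
    set J : V → V → ℝ := fun x y => θ x y - I x y / K with hJdef
    have hJanti : ∀ x y, J x y = -J y x := by
      intro x y
      simp only [hJdef]
      rw [hanti x y, hIanti x y]
      ring
    have hJint : ∀ x, x ≠ a → x ≠ b → ∑ y ∈ G.neighborFinset x, J x y = 0 := by
      intro x hxa hxb
      simp only [hJdef]
      rw [Finset.sum_sub_distrib, hint x hxa hxb, hθint x hxa hxb, sub_zero]
    have hJa : ∑ y ∈ G.neighborFinset a, J a y = 0 := by
      simp only [hJdef]
      rw [Finset.sum_sub_distrib, hsa, hθa]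
      norm_num
    have hJb : ∑ y ∈ G.neighborFinset b, J b y = 0 := by
      have htotJ := total_div_zero G J hJanti
      rw [sum_split_ab a b hab _ hJint, hJa] at htotJ
      linarith
    have hJdiv : ∀ x, ∑ y ∈ G.neighborFinset x, J x y = 0 := by
      intro x
      rcases eq_or_ne x a with rfl | hxa
      · exact hJa
      rcases eq_or_ne x b with rfl | hxb
      · exact hJb
      · exact hJint x hxa hxb
    have hzero : ∑ x, ∑ y ∈ G.neighborFinset x, (h y - h x) * J x y = 0 := by
      rw [sum_by_parts G h J hJanti,
        Finset.sum_congr rfl (fun x (_ : x ∈ univ) => by rw [hJdiv x, mul_zero]),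
        Finset.sum_const_zero, mul_zero]
    have hedge : ∀ x y, G.Adj x y →
        (c x y)⁻¹ ^ ((1:ℝ)/(p-1)) * |I x y / K| ^ (p/(p-1))
          + (p/(p-1) * (|K⁻¹| ^ (p/(p-1) - 2) * K⁻¹)) * ((h y - h x) * J x y)
          ≤ (c x y)⁻¹ ^ ((1:ℝ)/(p-1)) * |θ x y| ^ (p/(p-1)) := by
      intro x y hxy
      have hw : 0 ≤ (c x y)⁻¹ ^ ((1:ℝ)/(p-1)) :=
        Real.rpow_nonneg (inv_nonneg.mpr (hc_pos x y hxy).le) _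
      have hk2 := mul_le_mul_of_nonneg_left
        (key_ineq (p/(p-1)) hq (I x y / K) (θ x y)) hw
      have heq : (c x y)⁻¹ ^ ((1:ℝ)/(p-1)) *
            (p/(p-1) * ((|I x y / K| ^ (p/(p-1) - 2) * (I x y / K)) * (θ x y - I x y / K)))
          = (p/(p-1) * (|K⁻¹| ^ (p/(p-1) - 2) * K⁻¹)) * ((h y - h x) * J x y) := by
        have hid := hwphi x y hxy
        have hJxy : J x y = θ x y - I x y / K := by simp only [hJdef]
        calc (c x y)⁻¹ ^ ((1:ℝ)/(p-1)) *
              (p/(p-1) * ((|I x y / K| ^ (p/(p-1) - 2) * (I x y / K)) * (θ x y - I x y / K)))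
            = p/(p-1) * (((c x y)⁻¹ ^ ((1:ℝ)/(p-1)) *
                (|I x y / K| ^ (p/(p-1) - 2) * (I x y / K))) * (θ x y - I x y / K)) := by
              ring
          _ = p/(p-1) * (((h y - h x) * (|K⁻¹| ^ (p/(p-1) - 2) * K⁻¹)) *
                (θ x y - I x y / K)) := by rw [hid]
          _ = (p/(p-1) * (|K⁻¹| ^ (p/(p-1) - 2) * K⁻¹)) * ((h y - h x) * J x y) := by
              rw [hJxy]; ring
      rw [mul_add, heq] at hk2
      exact hk2
    have hsum : ∑ x, ∑ y ∈ G.neighborFinset x,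
        ((c x y)⁻¹ ^ ((1:ℝ)/(p-1)) * |I x y / K| ^ (p/(p-1))
          + (p/(p-1) * (|K⁻¹| ^ (p/(p-1) - 2) * K⁻¹)) * ((h y - h x) * J x y))
        ≤ ∑ x, ∑ y ∈ G.neighborFinset x,
          (c x y)⁻¹ ^ ((1:ℝ)/(p-1)) * |θ x y| ^ (p/(p-1)) :=
      Finset.sum_le_sum fun x _ => Finset.sum_le_sum fun y hy => hedge x y (hadj x y hy)
    have hsplit2 : ∑ x, ∑ y ∈ G.neighborFinset x,
        ((c x y)⁻¹ ^ ((1:ℝ)/(p-1)) * |I x y / K| ^ (p/(p-1))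
          + (p/(p-1) * (|K⁻¹| ^ (p/(p-1) - 2) * K⁻¹)) * ((h y - h x) * J x y))
        = (∑ x, ∑ y ∈ G.neighborFinset x,
            (c x y)⁻¹ ^ ((1:ℝ)/(p-1)) * |I x y / K| ^ (p/(p-1)))
          + (p/(p-1) * (|K⁻¹| ^ (p/(p-1) - 2) * K⁻¹)) *
            ∑ x, ∑ y ∈ G.neighborFinset x, (h y - h x) * J x y := by
      rw [Finset.sum_congr rfl (fun x (_ : x ∈ univ) => Finset.sum_add_distrib),
        Finset.sum_add_distrib,
        Finset.sum_congr rfl (fun x (_ : x ∈ univ) => (Finset.mul_sum _ _ _).symm),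
        (Finset.mul_sum _ _ _).symm]
    rw [hsplit2, hzero, mul_zero, add_zero] at hsum
    linarith
  -- identify the infimum
  have hmem : ((1/2) * ∑ x, ∑ y ∈ G.neighborFinset x,
      (c x y)⁻¹ ^ ((1:ℝ)/(p-1)) * |I x y / K| ^ (p/(p-1))) ∈ S := by
    rw [hS]
    exact ⟨fun x y => I x y / K, hθanti, hθint, hθa, rfl⟩
  have hlow : ∀ E ∈ S, ((1/2) * ∑ x, ∑ y ∈ G.neighborFinset x,
      (c x y)⁻¹ ^ ((1:ℝ)/(p-1)) * |I x y / K| ^ (p/(p-1))) ≤ E := by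
    rw [hS]
    rintro E ⟨θ, h1, h2, h3, rfl⟩
    exact hEbound θ h1 h2 h3
  have hsinf : sInf S = (1/2) * ∑ x, ∑ y ∈ G.neighborFinset x,
      (c x y)⁻¹ ^ ((1:ℝ)/(p-1)) * |I x y / K| ^ (p/(p-1)) :=
    le_antisymm (csInf_le ⟨_, fun E hE => hlow E hE⟩ hmem) (le_csInf ⟨_, hmem⟩ hlow)
  have habsK : 0 < |K| := abs_pos.mpr hKne
  have habsD : 0 < |h b - h a| := abs_pos.mpr hDne
  -- E₀ in multiplicative form
  have hE2 : (1/2) * ∑ x, ∑ y ∈ G.neighborFinset x,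
      (c x y)⁻¹ ^ ((1:ℝ)/(p-1)) * |I x y / K| ^ (p/(p-1))
        = |h b - h a| * |K| ^ (1 - p/(p-1)) := by
    rw [hE0val, show K * (h b - h a) = |K| * |h b - h a| by
        rw [← abs_mul, abs_of_pos hKD],
      Real.rpow_sub habsK, Real.rpow_one, div_eq_mul_inv |K| (|K| ^ (p/(p-1)))]
    ring
  constructor
  · rw [hsinf, hE2,
      Real.mul_rpow (abs_nonneg _) (Real.rpow_nonneg (abs_nonneg K) _),
      ← Real.rpow_mul (abs_nonneg K),
      show (1 - p/(p-1)) * (p-1) = -1 by field_simp; ring,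
      Real.rpow_neg_one]
    have habsdiv : (h b - h a) / K = |h b - h a| / |K| := by
      rcases hKne.lt_or_gt with hK | hK
      · have hD : h b - h a < 0 := by nlinarith
        rw [abs_of_neg hD, abs_of_neg hK, neg_div_neg_eq]
      · have hD : 0 < h b - h a := by nlinarith
        rw [abs_of_pos hD, abs_of_pos hK]
    rw [mul_div_assoc, habsdiv, div_eq_mul_inv |h b - h a| |K|, ← mul_assoc,
      ← Real.rpow_add_one habsD.ne', show p - 2 + 1 = p - 1 by ring]
  · refine ⟨fun x y => I x y / K, hθanti, hθint, hθa, by rw [hsinf], ?_⟩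
    set μ : ℝ := |K⁻¹| ^ (p/(p-1) - 2) * K⁻¹ with hμdef
    have hKinv : K⁻¹ ≠ 0 := inv_ne_zero hKne
    have hμpow : |μ| ^ (p - 2) * μ = K⁻¹ := by
      have habsμ : |μ| = |K⁻¹| ^ (p/(p-1) - 1) := by
        rw [hμdef, abs_sgnpow (p/(p-1) - 2) K⁻¹
            (by rw [show p/(p-1) - 2 + 1 = p/(p-1) - 1 by ring]
                rw [show p/(p-1) - 1 = (1:ℝ)/(p-1) by rw [div_sub_one hp1.ne']; ring_nf]
                positivity),
          show p/(p-1) - 2 + 1 = p/(p-1) - 1 by ring]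
      rw [habsμ, hμdef, ← Real.rpow_mul (abs_nonneg _), ← mul_assoc,
        ← Real.rpow_add (abs_pos.mpr hKinv),
        show (p/(p-1) - 1) * (p - 2) + (p/(p-1) - 2) = 0 by field_simp; ring,
        Real.rpow_zero, one_mul]
    have hgen : ∀ x y : V,
        c x y * |μ * h y - μ * h x| ^ (p - 2) * (μ * h y - μ * h x) = I x y / K := by
      intro x y
      rw [show μ * h y - μ * h x = μ * (h y - h x) by ring, mul_assoc,
        sgnpow_mul (p - 2) μ (h y - h x), hμpow, hI x y, div_eq_mul_inv]
      ring
    refine ⟨fun x => μ * h x, ?_, ?_⟩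
    · intro x hxa hxb
      rw [Finset.sum_congr rfl fun y _ => hgen x y, ← Finset.sum_div,
        hdivI x hxa hxb, zero_div]
    · intro x y _
      exact (hgen x y).symm
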